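/- arXiv:2211.01063 — 3 statements merged into one kernel-verified Lean document; each statement's English description precedes it below -/
import Mathlib

section
/- Let y = (y_1,…,y_n) be a list of n positive integers, m = y_1 + ⋯ + y_n, and let x = (x_1,…,x_n) with each x_i ∈ {1,…,m} be nondecreasing (x_1 ≤ x_2 ≤ ⋯ ≤ x_n). Then x is a parking assortment for y if and only if x_i ≤ 1 + Σ_{j=1}^{i−1} y_j for all i ∈ {1,…,n}. -/
open Classical in
/-- One car attempts to park on a one-way street with spots `1, …, m`: given the set
`occ` of occupied spots, the car with preference `p` and length `l` parks in spots
`j, j+1, …, j+l-1` for the least `j ≥ p` such that these spots all exist (are `≤ m`)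
and are unoccupied; returns the new set of occupied spots, or `none` if parking fails. -/
noncomputable def parkOne (m : ℕ) (occ : Finset ℕ) (p l : ℕ) : Option (Finset ℕ) :=
  if h : ∃ j, p ≤ j ∧ j + l ≤ m + 1 ∧ ∀ k ∈ Finset.Ico j (j + l), k ∉ occ then
    some (occ ∪ Finset.Ico (Nat.find h) (Nat.find h + l))
  else none

/-- Run the parking-assortment process for the cars `(preference, length)` in order. -/
noncomputable def parkList (m : ℕ) : List (ℕ × ℕ) → Finset ℕ → Option (Finset ℕ)
  | [], occ => some occ
  | c :: rest, occ => (parkOne m occ c.1 c.2).bind (parkList m rest)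

/-- `x` is a parking assortment for the list of car lengths `y`. -/
def IsPA (y x : List ℕ) : Prop :=
  x.length = y.length ∧ (∀ a ∈ x, 1 ≤ a ∧ a ≤ y.sum) ∧
    (parkList y.sum (x.zip y) ∅).isSome

/-- `PA y` is the set of parking assortments for `y`. -/
def PA (y : List ℕ) : Set (List ℕ) := {x | IsPA y x}

/-- `PAinv y` is the set of (permutation-)invariant parking assortments for `y`:
those preference lists all of whose rearrangements are parking assortments for `y`. -/
def PAinv (y : List ℕ) : Set (List ℕ) := {x | ∀ x', x'.Perm x → IsPA y x'}

/-- `y` is minimally invariant if the all-ones list is the only invariant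
parking assortment for `y`. -/
def MinInv (y : List ℕ) : Prop := PAinv y = {List.replicate y.length 1}

open Classical in
lemma parkOne_eq_some {m : ℕ} {occ : Finset ℕ} {p l : ℕ} {occ' : Finset ℕ}
    (h : parkOne m occ p l = some occ') :
    ∃ j, p ≤ j ∧ j + l ≤ m + 1 ∧ (∀ k ∈ Finset.Ico j (j + l), k ∉ occ) ∧
      occ' = occ ∪ Finset.Ico j (j + l) := by
  unfold parkOne at h
  split at h
  · rename_i hex
    obtain ⟨h1, h2, h3⟩ := Nat.find_spec hex
    exact ⟨Nat.find hex, h1, h2, h3, (Option.some_inj.mp h).symm⟩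
  · exact absurd h (by simp)

lemma parkList_spec {m : ℕ} : ∀ (L : List (ℕ × ℕ)) (occ occ' : Finset ℕ) (q : ℕ),
    parkList m L occ = some occ' → (∀ c ∈ L, q ≤ c.1) →
    occ'.card = occ.card + (L.map Prod.snd).sum ∧ occ' ⊆ occ ∪ Finset.Ico q (m + 1) := by
  intro L
  induction L with
  | nil =>
    intro occ occ' q h _
    simp only [parkList, Option.some_inj] at h
    subst h
    simp
  | cons c rest ih =>
    intro occ occ' q h hq
    simp only [parkList, Option.bind_eq_some_iff] at h
    obtain ⟨occ₁, h1, h2⟩ := h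
    obtain ⟨j, hpj, hjm, hdisj, rfl⟩ := parkOne_eq_some h1
    have hdisj' : Disjoint occ (Finset.Ico j (j + c.2)) :=
      Finset.disjoint_right.mpr hdisj
    have hcard : (occ ∪ Finset.Ico j (j + c.2)).card = occ.card + c.2 := by
      rw [Finset.card_union_of_disjoint hdisj', Nat.card_Ico]
      omega
    have hsub : Finset.Ico j (j + c.2) ⊆ Finset.Ico q (m + 1) :=
      Finset.Ico_subset_Ico (le_trans (hq c (List.mem_cons_self)) hpj) hjm
    obtain ⟨hc, hs⟩ := ih _ _ q h2 (fun d hd => hq d (List.mem_cons_of_mem _ hd))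
    constructor
    · rw [hc, hcard]
      simp only [List.map_cons, List.sum_cons]
      omega
    · intro a ha
      rcases Finset.mem_union.mp (hs ha) with h | h
      · rcases Finset.mem_union.mp h with h | h
        · exact Finset.mem_union_left _ h
        · exact Finset.mem_union_right _ (hsub h)
      · exact Finset.mem_union_right _ h

lemma parkList_append {m : ℕ} : ∀ (L₁ L₂ : List (ℕ × ℕ)) (occ : Finset ℕ),
    parkList m (L₁ ++ L₂) occ = (parkList m L₁ occ).bind (parkList m L₂) := by
  intro L₁
  induction L₁ with
  | nil => intro L₂ occ; simp [parkList]
  | cons c rest ih =>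
    intro L₂ occ
    simp only [List.cons_append, parkList]
    rw [Option.bind_assoc]
    exact congrArg _ (funext fun o => ih L₂ o)

lemma parkList_success {m : ℕ} : ∀ (L : List (ℕ × ℕ)) (s : ℕ),
    (∀ c ∈ L, 0 < c.2) → s + (L.map Prod.snd).sum ≤ m →
    (∀ i (h : i < L.length), 1 ≤ (L.get ⟨i, h⟩).1 ∧
      (L.get ⟨i, h⟩).1 ≤ s + 1 + ((L.take i).map Prod.snd).sum) →
    parkList m L (Finset.Ico 1 (s + 1)) =
      some (Finset.Ico 1 (s + (L.map Prod.snd).sum + 1)) := by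
  intro L
  induction L with
  | nil => intro s _ _ _; simp [parkList]
  | cons c rest ih =>
    intro s hpos hsum hc
    have hl : 0 < c.2 := hpos c (List.mem_cons_self)
    obtain ⟨hp1, hps⟩ := hc 0 (by simp)
    simp only [List.get, List.take_zero, List.map_nil, List.sum_nil, Nat.add_zero] at hp1 hps
    have hsum' : s + c.2 ≤ m := by
      simp only [List.map_cons, List.sum_cons] at hsum; omega
    have hex : ∃ j, c.1 ≤ j ∧ j + c.2 ≤ m + 1 ∧
        ∀ k ∈ Finset.Ico j (j + c.2), k ∉ Finset.Ico 1 (s + 1) := by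
      refine ⟨s + 1, hps, by omega, fun k hk => ?_⟩
      simp only [Finset.mem_Ico] at hk ⊢
      omega
    have hfind : Nat.find hex = s + 1 := by
      rw [Nat.find_eq_iff]
      constructor
      · refine ⟨hps, by omega, fun k hk => ?_⟩
        simp only [Finset.mem_Ico] at hk ⊢
        omega
      · intro j hj hcon
        obtain ⟨h1, _, h3⟩ := hcon
        exact h3 j (by simp only [Finset.mem_Ico]; omega)
          (by simp only [Finset.mem_Ico]; omega)
    have hone : parkOne m (Finset.Ico 1 (s + 1)) c.1 c.2 =
        some (Finset.Ico 1 (s + c.2 + 1)) := by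
      rw [parkOne, dif_pos hex, hfind,
        Finset.Ico_union_Ico_eq_Ico (by omega) (by omega),
        show s + 1 + c.2 = s + c.2 + 1 from by omega]
    simp only [parkList, hone, Option.bind_some]
    have := ih (s + c.2) (fun d hd => hpos d (List.mem_cons_of_mem _ hd))
      (by simp only [List.map_cons, List.sum_cons] at hsum; omega)
      (fun i h => by
        have := hc (i + 1) (by simpa using Nat.succ_lt_succ h)
        simp only [List.get, List.take_succ_cons, List.map_cons, List.sum_cons] at this
        constructor
        · exact this.1
        · calc (rest.get ⟨i, h⟩).1 ≤ s + 1 + (c.2 + ((rest.take i).map Prod.snd).sum) :=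
              this.2
            _ = s + c.2 + 1 + ((rest.take i).map Prod.snd).sum := by omega)
    rw [this]
    congr 2
    simp only [List.map_cons, List.sum_cons]
    omega

theorem stmt0 (y x : List ℕ) (hy : ∀ a ∈ y, 0 < a)
    (hlen : x.length = y.length)
    (hx : ∀ a ∈ x, 1 ≤ a ∧ a ≤ y.sum)
    (hsort : x.Pairwise (· ≤ ·)) :
    x ∈ PA y ↔ ∀ i < x.length, x.getD i 0 ≤ 1 + (y.take i).sum := by
  set m := y.sum with hm
  have hzlen : (x.zip y).length = x.length := by
    rw [List.length_zip, hlen, Nat.min_self]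
  have hmapsnd : (x.zip y).map Prod.snd = y := List.map_snd_zip hlen.ge
  have htake : ∀ i, ((x.zip y).take i).map Prod.snd = y.take i := by
    intro i
    rw [List.zip_eq_zipWith, List.take_zipWith, ← List.zip_eq_zipWith]
    exact List.map_snd_zip (by simp [hlen])
  constructor
  · -- forward: parking succeeds → preference bounds
    rintro ⟨-, -, hsome⟩ i hi
    by_contra hcon
    push_neg at hcon
    obtain ⟨occ', hocc'⟩ := Option.isSome_iff_exists.mp hsome
    have hiy : i < y.length := hlen ▸ hi
    set q := x.getD i 0 with hq
    have hqget : q = x[i] := by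
      rw [hq, List.getD_eq_getElem?_getD, List.getElem?_eq_getElem hi]; rfl
    set S := (y.take i).sum with hS
    -- split the list
    have hsplit := List.take_append_drop i (x.zip y)
    rw [← hsplit, parkList_append] at hocc'
    obtain ⟨occ₁, h1, h2⟩ := Option.bind_eq_some_iff.mp hocc'
    have spec1 := parkList_spec _ _ _ 0 h1 (fun c _ => Nat.zero_le _)
    have spec2 := parkList_spec _ _ _ q h2 ?_
    · have hc1 : occ₁.card = S := by
        rw [spec1.1, Finset.card_empty, Nat.zero_add]
        congr 1
        rw [htake]
      have hdropmap : ((x.zip y).drop i).map Prod.snd = y.drop i := by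
        rw [List.zip_eq_zipWith, List.drop_zipWith, ← List.zip_eq_zipWith]
        exact List.map_snd_zip (by simp [hlen])
      have hc2 : occ'.card = S + (y.drop i).sum := by
        rw [spec2.1, hc1, hdropmap]
      have hSm : S + (y.drop i).sum = m := by
        rw [hS, hm, ← List.sum_take_add_sum_drop y i]
      have hdrop_pos : 0 < (y.drop i).sum := by
        rw [List.drop_eq_getElem_cons hiy, List.sum_cons]
        have := hy y[i] (List.getElem_mem hiy)
        omega
      have hcard_le : occ'.card ≤ occ₁.card + (Finset.Ico q (m + 1)).card :=
        le_trans (Finset.card_le_card spec2.2) (Finset.card_union_le _ _)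
      rw [Nat.card_Ico] at hcard_le
      omega
    · -- every later car has preference ≥ q
      intro c hc
      have hc1 : c.1 ∈ x.drop i := by
        have : c ∈ (x.drop i).zip (y.drop i) := by
          rw [List.zip_eq_zipWith, List.drop_zipWith, ← List.zip_eq_zipWith] at hc
          exact hc
        exact (List.of_mem_zip this).1
      rw [List.drop_eq_getElem_cons hi] at hc1
      have hpw : List.Pairwise (· ≤ ·) (x[i] :: x.drop (i + 1)) := by
        rw [← List.drop_eq_getElem_cons hi]
        exact hsort.drop
      rcases List.mem_cons.mp hc1 with h | h
      · rw [hqget, h]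
      · exact hqget ▸ (List.rel_of_pairwise_cons hpw h)
  · -- backward: preference bounds → parking succeeds
    intro hcond
    refine ⟨hlen, hx, ?_⟩
    have hempty : (∅ : Finset ℕ) = Finset.Ico 1 (0 + 1) := by simp
    rw [hempty, parkList_success (x.zip y) 0 ?_ ?_ ?_]
    · simp
    · intro c hc
      exact hy c.2 (List.of_mem_zip hc).2
    · rw [Nat.zero_add, hmapsnd]
    · intro i h
      have hix : i < x.length := hzlen ▸ h
      have hiy : i < y.length := hlen ▸ hix
      have hget : (x.zip y).get ⟨i, h⟩ = (x[i], y[i]) := by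
        simp [List.getElem_zip]
      rw [hget]
      constructor
      · exact (hx x[i] (List.getElem_mem hix)).1
      · have := hcond i hix
        rw [List.getD_eq_getElem?_getD, List.getElem?_eq_getElem hix] at this
        rw [htake]
        simpa using this
end

section
/- Let y = (y_1,…,y_n) be a list of n positive integers, x = (x_1,…,x_n) a preference list, and k = min_{i∈[n]} y_i. If there exists an index i ∈ {1,…,n} with 1 < x_i ≤ k, then x is not an invariant parking assortment for y. -/
/-- Key invariant: if spot `a` is already occupied and every remaining car has
preference `≥ 1` and length `≥ a`, then every later car parks within `[a, m]`,
and the total occupied count grows by the sum of the lengths. -/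
lemma park_aux (m a : ℕ) : ∀ (cs : List (ℕ × ℕ)) (occ occ' : Finset ℕ),
    (∀ c ∈ cs, 1 ≤ c.1 ∧ a ≤ c.2) → a ∈ occ →
    parkList m cs occ = some occ' →
    occ' ⊆ occ ∪ Finset.Ico a (m + 1) ∧
      occ'.card = occ.card + (cs.map Prod.snd).sum := by
  intro cs
  induction cs with
  | nil =>
    intro occ occ' _ _ hpark
    simp only [parkList, Option.some.injEq] at hpark
    subst hpark
    simp
  | cons c rest ih =>
    intro occ occ' hc ha hpark
    obtain ⟨p, l⟩ := c
    have hp1 : 1 ≤ p := (hc (p, l) (List.mem_cons_self)).1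
    have hal : a ≤ l := (hc (p, l) (List.mem_cons_self)).2
    simp only [parkList] at hpark
    unfold parkOne at hpark
    split at hpark
    case isFalse => simp at hpark
    case isTrue hex =>
      obtain ⟨hpj, hjm, hfree⟩ := Nat.find_spec hex
      set j := Nat.find hex with hj
      simp only [Option.bind_some] at hpark
      have haj : a ≤ j := by
        by_contra hja
        push_neg at hja
        exact hfree a (Finset.mem_Ico.mpr ⟨le_of_lt hja, by omega⟩) ha
      have hdisj : Disjoint occ (Finset.Ico j (j + l)) := by
        rw [Finset.disjoint_right]
        intro s hs
        exact fun hso => hfree s hs hso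
      have hsub : Finset.Ico j (j + l) ⊆ Finset.Ico a (m + 1) := by
        apply Finset.Ico_subset_Ico haj hjm
      obtain ⟨h1, h2⟩ := ih (occ ∪ Finset.Ico j (j + l)) occ'
        (fun c hc' => hc c (List.mem_cons_of_mem _ hc'))
        (Finset.mem_union_left _ ha) hpark
      constructor
      · intro s hs
        rcases Finset.mem_union.mp (h1 hs) with hs' | hs'
        · rcases Finset.mem_union.mp hs' with h | h
          · exact Finset.mem_union_left _ h
          · exact Finset.mem_union_right _ (hsub h)
        · exact Finset.mem_union_right _ hs'
      · rw [h2, Finset.card_union_of_disjoint hdisj, Nat.card_Ico]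
        simp only [List.map_cons, List.sum_cons]
        omega

theorem stmt2 (y x : List ℕ) (hy : ∀ a ∈ y, 0 < a)
    (hlen : x.length = y.length)
    (k : ℕ) (hkmem : k ∈ y) (hkmin : ∀ a ∈ y, k ≤ a)
    (h : ∃ a ∈ x, 1 < a ∧ a ≤ k) :
    x ∉ PAinv y := by
  obtain ⟨a, hax, ha1, hak⟩ := h
  intro hinv
  have hperm : (a :: x.erase a).Perm x := (List.perm_cons_erase hax).symm
  obtain ⟨hlen', hbound, hsome⟩ := hinv (a :: x.erase a) hperm
  obtain ⟨b, ys, rfl⟩ : ∃ b ys, y = b :: ys := by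
    cases y with
    | nil => simp at hkmem
    | cons b ys => exact ⟨b, ys, rfl⟩
  have hb : 0 < b := hy b (List.mem_cons_self)
  have hkb : k ≤ b := hkmin b (List.mem_cons_self)
  set m := (b :: ys).sum with hm
  have hmval : m = b + ys.sum := by simp [hm]
  simp only [List.zip_cons_cons] at hsome
  rcases List.eq_nil_or_concat ys with hys | _
  · -- single-car case: y = [b], street has b spots, car wants spot a > 1: fails
    subst hys
    have hm1 : m = b := by simp [hm]
    have hnone : parkOne m ∅ a b = none := by
      unfold parkOne
      rw [dif_neg]
      push_neg
      intro j hj1 hj2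
      omega
    simp only [parkList, hnone, Option.bind_none, Option.isSome_none] at hsome
    exact Bool.false_ne_true hsome
  · -- at least two cars
    have hys_ne : ys ≠ [] := by rintro rfl; simp_all
    obtain ⟨c, hc⟩ := List.exists_mem_of_ne_nil ys hys_ne
    have hcs : c ≤ ys.sum := List.single_le_sum (fun _ _ => Nat.zero_le _) c hc
    have hka : a ≤ c := le_trans hak (hkmin c (List.mem_cons_of_mem _ hc))
    have habm : a + b ≤ m := by omega
    have hex : ∃ j, a ≤ j ∧ j + b ≤ m + 1 ∧
        ∀ s ∈ Finset.Ico j (j + b), s ∉ (∅ : Finset ℕ) := by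
      exact ⟨a, le_refl a, by omega, fun s _ hs => (Finset.notMem_empty s) hs⟩
    have hfind : Nat.find hex = a :=
      le_antisymm (Nat.find_le ⟨le_refl a, by omega, fun s _ hs => (Finset.notMem_empty s) hs⟩)
        (Nat.find_spec hex).1
    have hstep : parkList m ((a, b) :: (x.erase a).zip ys) ∅ =
        parkList m ((x.erase a).zip ys) (Finset.Ico a (a + b)) := by
      simp only [parkList]
      unfold parkOne
      rw [dif_pos hex, hfind]
      simp
    rw [hstep] at hsome
    obtain ⟨occ', hocc'⟩ := Option.isSome_iff_exists.mp hsome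
    have hcond : ∀ c' ∈ (x.erase a).zip ys, 1 ≤ c'.1 ∧ a ≤ c'.2 := by
      intro c' hc'
      obtain ⟨h1, h2⟩ := List.of_mem_zip hc'
      refine ⟨(hbound c'.1 (List.mem_cons_of_mem _ h1)).1, ?_⟩
      exact le_trans hak (hkmin c'.2 (List.mem_cons_of_mem _ h2))
    have hmema : a ∈ Finset.Ico a (a + b) := Finset.mem_Ico.mpr ⟨le_refl a, by omega⟩
    obtain ⟨hsub, hcard⟩ := park_aux m a ((x.erase a).zip ys) _ occ' hcond hmema hocc'
    have hlenx : (x.erase a).length = ys.length := by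
      rw [List.length_erase_of_mem hax]
      simp at hlen
      omega
    have hsnd : ((x.erase a).zip ys).map Prod.snd = ys :=
      List.map_snd_zip (le_of_eq hlenx.symm)
    have hcard' : occ'.card = m := by
      rw [hcard, hsnd, Nat.card_Ico]
      omega
    have hsub' : occ' ⊆ Finset.Ico a (m + 1) := by
      intro s hs
      rcases Finset.mem_union.mp (hsub hs) with h | h
      · exact Finset.Ico_subset_Ico (le_refl a) (by omega) h
      · exact h
    have := Finset.card_le_card hsub'
    rw [hcard', Nat.card_Ico] at this
    omega
end

section
/- Let c and n be positive integers, y = (c,c,…,c) ∈ ℕ^n the constant list, and x = (x_1,…,x_n) with each x_i ∈ {1,…,cn}. Then x is an invariant parking assortment for y if and only if both of the following hold: (1) x_i ≡ 1 (mod c) for all i ∈ {1,…,n}, and (2) for every j ∈ {1,…,n}, the number of indices i ∈ {1,…,n} with x_i ≤ c·j is at least j. -/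
/-! ### Auxiliary development: unit (block) parking model -/

open Classical in
/-- Unit parking model on `n` spots `0, …, n-1`: car with preference `k` takes the
least free spot `t` with `k ≤ t < n`. -/
noncomputable def upark (n : ℕ) : List ℕ → Finset ℕ → Option (Finset ℕ)
  | [], S => some S
  | k :: l, S =>
    if h : ∃ t, k ≤ t ∧ t < n ∧ t ∉ S then upark n l (insert (Nat.find h) S) else none

lemma usuff (n : ℕ) : ∀ (l : List ℕ) (S : Finset ℕ),
    (∀ j, j ≤ n → l.countP (fun k => decide (j ≤ k)) ≤
      ((Finset.Ico j n).filter (fun t => t ∉ S)).card) →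
    (upark n l S).isSome := by
  intro l
  induction l with
  | nil => intro S _; simp [upark]
  | cons k l ih =>
    intro S hcond
    by_cases hkn : k < n
    · have h1 := hcond k (le_of_lt hkn)
      have hcount : 1 ≤ (k :: l).countP (fun k' => decide (k ≤ k')) := by
        simp [List.countP_cons]
      have hex : ∃ t, k ≤ t ∧ t < n ∧ t ∉ S := by
        have : 0 < ((Finset.Ico k n).filter (fun t => t ∉ S)).card := lt_of_lt_of_le hcount h1
        obtain ⟨t, ht⟩ := Finset.card_pos.mp this
        simp only [Finset.mem_filter, Finset.mem_Ico] at ht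
        exact ⟨t, ht.1.1, ht.1.2, ht.2⟩
      rw [upark]
      rw [dif_pos hex]
      set t₀ := Nat.find hex with ht₀
      obtain ⟨hkt₀, ht₀n, ht₀S⟩ := Nat.find_spec hex
      apply ih
      intro j hj
      have hmid : ∀ t, k ≤ t → t < t₀ → t ∈ S := by
        intro t h1 h2
        by_contra hts
        exact absurd (Nat.find_le ⟨h1, lt_of_lt_of_le h2 (le_of_lt ht₀n), hts⟩) (not_le.mpr h2)
      by_cases hjk : j ≤ k
      · have hcc : (k :: l).countP (fun k' => decide (j ≤ k')) =
            l.countP (fun k' => decide (j ≤ k')) + 1 := by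
          simp [List.countP_cons, hjk]
        have hsub : ((Finset.Ico j n).filter (fun t => t ∉ insert t₀ S)) =
            ((Finset.Ico j n).filter (fun t => t ∉ S)).erase t₀ := by
          ext t
          simp only [Finset.mem_filter, Finset.mem_erase, Finset.mem_insert, Finset.mem_Ico]
          tauto
        have ht₀mem : t₀ ∈ (Finset.Ico j n).filter (fun t => t ∉ S) := by
          simp only [Finset.mem_filter, Finset.mem_Ico]
          exact ⟨⟨le_trans hjk hkt₀, ht₀n⟩, ht₀S⟩
        have := hcond j hj
        rw [hcc] at this
        rw [hsub, Finset.card_erase_of_mem ht₀mem]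
        omega
      · push_neg at hjk
        by_cases hjt : j ≤ t₀
        · have hkey : ((Finset.Ico k n).filter (fun t => t ∉ S)).erase t₀ ⊆
              ((Finset.Ico j n).filter (fun t => t ∉ insert t₀ S)) := by
            intro t ht
            simp only [Finset.mem_filter, Finset.mem_erase, Finset.mem_insert, Finset.mem_Ico,
              not_or] at ht ⊢
            obtain ⟨hne, ⟨hkt, htn⟩, htS⟩ := ht
            have hjt' : j ≤ t := by
              by_contra hlt
              push_neg at hlt
              exact htS (hmid t hkt (by omega))
            exact ⟨⟨hjt', htn⟩, hne, htS⟩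
          have ht₀mem : t₀ ∈ (Finset.Ico k n).filter (fun t => t ∉ S) := by
            simp only [Finset.mem_filter, Finset.mem_Ico]
            exact ⟨⟨hkt₀, ht₀n⟩, ht₀S⟩
          have h2 := hcond k (le_of_lt hkn)
          have hcc : (k :: l).countP (fun k' => decide (k ≤ k')) =
              l.countP (fun k' => decide (k ≤ k')) + 1 := by
            simp [List.countP_cons]
          have hmono : l.countP (fun k' => decide (j ≤ k')) ≤
              l.countP (fun k' => decide (k ≤ k')) := by
            apply List.countP_mono_left
            intro a _ ha
            simp at ha ⊢; omega
          have hcard := Finset.card_le_card hkey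
          rw [Finset.card_erase_of_mem ht₀mem] at hcard
          rw [hcc] at h2
          have hpos : 0 < ((Finset.Ico k n).filter (fun t => t ∉ S)).card :=
            Finset.card_pos.mpr ⟨t₀, ht₀mem⟩
          omega
        · push_neg at hjt
          have hcc : (k :: l).countP (fun k' => decide (j ≤ k')) =
              l.countP (fun k' => decide (j ≤ k')) := by
            simp [List.countP_cons]; omega
          have hsub : ((Finset.Ico j n).filter (fun t => t ∉ insert t₀ S)) =
              ((Finset.Ico j n).filter (fun t => t ∉ S)) := by
            ext t
            simp only [Finset.mem_filter, Finset.mem_insert, Finset.mem_Ico, not_or]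
            constructor
            · rintro ⟨h1, _, h3⟩; exact ⟨h1, h3⟩
            · rintro ⟨h1, h3⟩
              refine ⟨h1, ?_, h3⟩
              rintro rfl; omega
          rw [hsub]
          have := hcond j hj
          omega
    · exfalso
      have := hcond n le_rfl
      have : 1 ≤ (0:ℕ) := by
        simp only [Finset.Ico_self, Finset.filter_empty, Finset.card_empty] at this
        refine le_trans ?_ this
        have : decide (n ≤ k) = true := by simp; omega
        simp [List.countP_cons, this]
      omega

lemma unec (n : ℕ) : ∀ (l : List ℕ) (S S' : Finset ℕ),
    upark n l S = some S' →
    S ⊆ S' ∧ (∀ t ∈ S', t ∈ S ∨ t < n) ∧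
      ∀ j, l.countP (fun k => decide (j ≤ k)) ≤ ((S' \ S).filter (fun t => j ≤ t)).card := by
  intro l
  induction l with
  | nil =>
    intro S S' h
    simp [upark] at h
    subst h
    exact ⟨Finset.Subset.refl _, fun t ht => Or.inl ht, fun j => by simp⟩
  | cons k l ih =>
    intro S S' h
    rw [upark] at h
    by_cases hex : ∃ t, k ≤ t ∧ t < n ∧ t ∉ S
    · rw [dif_pos hex] at h
      set t₀ := Nat.find hex with ht₀
      obtain ⟨hkt₀, ht₀n, ht₀S⟩ := Nat.find_spec hex
      obtain ⟨hsub, hbound, hcnt⟩ := ih (insert t₀ S) S' h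
      have hSsub : S ⊆ S' := le_trans (Finset.subset_insert _ _) hsub
      refine ⟨hSsub, ?_, ?_⟩
      · intro t ht
        rcases hbound t ht with h1 | h1
        · rcases Finset.mem_insert.mp h1 with rfl | h2
          · right; exact ht₀n
          · left; exact h2
        · right; exact h1
      · intro j
        have key : ((S' \ insert t₀ S).filter (fun t => j ≤ t)) ⊆
            (((S' \ S).filter (fun t => j ≤ t)).erase t₀) := by
          intro t ht
          simp only [Finset.mem_filter, Finset.mem_sdiff, Finset.mem_erase,
            Finset.mem_insert, not_or] at ht ⊢
          tauto
        by_cases hjk : j ≤ k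
        · have ht₀mem : t₀ ∈ (S' \ S).filter (fun t => j ≤ t) := by
            simp only [Finset.mem_filter, Finset.mem_sdiff]
            exact ⟨⟨hsub (Finset.mem_insert_self _ _), ht₀S⟩, le_trans hjk hkt₀⟩
          have hcc : (k :: l).countP (fun k' => decide (j ≤ k')) =
              l.countP (fun k' => decide (j ≤ k')) + 1 := by
            simp [List.countP_cons, hjk]
          have h1 := hcnt j
          have h2 := Finset.card_le_card key
          rw [Finset.card_erase_of_mem ht₀mem] at h2
          have h3 : 0 < ((S' \ S).filter (fun t => j ≤ t)).card :=
            Finset.card_pos.mpr ⟨t₀, ht₀mem⟩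
          omega
        · have hcc : (k :: l).countP (fun k' => decide (j ≤ k')) =
              l.countP (fun k' => decide (j ≤ k')) := by
            simp [List.countP_cons]; omega
          have h1 := hcnt j
          have h2 := Finset.card_le_card key
          have h3 := Finset.card_erase_le (a := t₀)
            (s := (S' \ S).filter (fun t => j ≤ t))
          omega
    · rw [dif_neg hex] at h
      exact absurd h (by simp)

/-- The set of spots covered by the blocks indexed by `S` (0-based blocks of length `c`). -/
noncomputable def occSet (c : ℕ) (S : Finset ℕ) : Finset ℕ :=
  S.biUnion fun t => Finset.Ico (c*t+1) (c*t+c+1)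

lemma mem_occSet {c : ℕ} {S : Finset ℕ} {s : ℕ} :
    s ∈ occSet c S ↔ ∃ t ∈ S, c*t+1 ≤ s ∧ s < c*t+c+1 := by
  simp [occSet, Finset.mem_Ico]

lemma blkidx {c t s : ℕ} (h1 : c*t+1 ≤ s) (h2 : s < c*t+c+1) : (s-1)/c = t := by
  apply Nat.div_eq_of_lt_le
  · rw [mul_comm]; omega
  · have h : (t+1)*c = c*t + c := by ring
    omega

lemma exQ_of_P {c n k : ℕ} (hc : 0 < c) (S : Finset ℕ) (j : ℕ)
    (h1 : c*k+1 ≤ j) (h2 : j + c ≤ c*n+1)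
    (h3 : ∀ s ∈ Finset.Ico j (j+c), s ∉ occSet c S) :
    ∃ t, (k ≤ t ∧ t < n ∧ t ∉ S) ∧ c*t+1 ≤ j := by
  set t := (j-1)/c with htdef
  have hdm := Nat.div_add_mod (j-1) c
  have hmlt : (j-1) % c < c := Nat.mod_lt _ hc
  rw [← htdef] at hdm
  have hb1 : c*t ≤ j - 1 := by omega
  have hb2 : j - 1 < c*t + c := by omega
  have hj1 : 1 ≤ j := by omega
  have hkt : k ≤ t := by
    have h' : c*k < c*(t+1) := by
      have e : c*(t+1) = c*t + c := by ring
      omega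
    have := Nat.lt_of_mul_lt_mul_left h'
    omega
  have htn : t < n := by
    have h' : c*(t+1) ≤ c*n := by
      have e : c*(t+1) = c*t + c := by ring
      omega
    exact Nat.le_of_mul_le_mul_left h' hc
  have htS : t ∉ S := by
    intro hmem
    refine h3 (c*t + c) ?_ ?_
    · rw [Finset.mem_Ico]; omega
    · rw [mem_occSet]; exact ⟨t, hmem, by omega, by omega⟩
  exact ⟨t, ⟨hkt, htn, htS⟩, by omega⟩

open Classical in
lemma parkOne_occSet {c n : ℕ} (hc : 0 < c) (S : Finset ℕ) (hS : ∀ t ∈ S, t < n) (k : ℕ) :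
    parkOne (c*n) (occSet c S) (c*k+1) c =
      if h : ∃ t, k ≤ t ∧ t < n ∧ t ∉ S then some (occSet c (insert (Nat.find h) S))
      else none := by
  by_cases hex : ∃ t, k ≤ t ∧ t < n ∧ t ∉ S
  · rw [dif_pos hex]
    set t₀ := Nat.find hex with ht₀def
    obtain ⟨hkt₀, ht₀n, ht₀S⟩ := Nat.find_spec hex
    rw [← ht₀def] at hkt₀ ht₀n ht₀S
    have hPt₀ : c*k+1 ≤ c*t₀+1 ∧ (c*t₀+1) + c ≤ c*n + 1 ∧
        ∀ s ∈ Finset.Ico (c*t₀+1) (c*t₀+1+c), s ∉ occSet c S := by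
      refine ⟨by have := Nat.mul_le_mul_left c hkt₀; omega, ?_, ?_⟩
      · have h' : c*(t₀+1) ≤ c*n := Nat.mul_le_mul_left c ht₀n
        have e : c*(t₀+1) = c*t₀ + c := by ring
        omega
      · intro s hs hmem
        rw [Finset.mem_Ico] at hs
        rw [mem_occSet] at hmem
        obtain ⟨t, htS, hm1, hm2⟩ := hmem
        have e1 := blkidx hm1 hm2
        have e2 := blkidx (c := c) (t := t₀) (s := s) (by omega) (by omega)
        rw [e1] at e2
        exact ht₀S (e2 ▸ htS)
    have hP : ∃ j, c*k+1 ≤ j ∧ j + c ≤ c*n + 1 ∧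
        ∀ s ∈ Finset.Ico j (j+c), s ∉ occSet c S := ⟨c*t₀+1, hPt₀⟩
    rw [parkOne, dif_pos hP]
    have hfind : Nat.find hP = c*t₀+1 := by
      apply le_antisymm (Nat.find_le hPt₀)
      obtain ⟨h1, h2, h3⟩ := Nat.find_spec hP
      obtain ⟨t, hQt, hjt⟩ := exQ_of_P hc S _ h1 h2 h3
      have : t₀ ≤ t := Nat.find_min' hex hQt
      have := Nat.mul_le_mul_left c this
      omega
    rw [hfind]
    congr 1
    rw [show c*t₀+1+c = c*t₀+c+1 by omega]
    rw [occSet, occSet, Finset.biUnion_insert, Finset.union_comm]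
  · rw [dif_neg hex, parkOne, dif_neg]
    rintro ⟨j, h1, h2, h3⟩
    obtain ⟨t, hQt, -⟩ := exQ_of_P hc S j h1 h2 h3
    exact hex ⟨t, hQt⟩

lemma parkList_occSet {c n : ℕ} (hc : 0 < c) : ∀ (l : List ℕ) (S : Finset ℕ),
    (∀ t ∈ S, t < n) →
    parkList (c*n) (l.map fun k => (c*k+1, c)) (occSet c S) =
      Option.map (occSet c) (upark n l S) := by
  intro l
  induction l with
  | nil => intro S _; simp [parkList, upark]
  | cons k l ih =>
    intro S hS
    rw [List.map_cons, parkList, upark, parkOne_occSet hc S hS k]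
    by_cases hex : ∃ t, k ≤ t ∧ t < n ∧ t ∉ S
    · rw [dif_pos hex, dif_pos hex, Option.bind_some]
      apply ih
      intro t ht
      rcases Finset.mem_insert.mp ht with rfl | ht'
      · exact (Nat.find_spec hex).2.1
      · exact hS t ht'
    · rw [dif_neg hex, dif_neg hex, Option.bind_none]
      rfl

lemma mu_bound {m c a : ℕ} (hc : 0 < c) : ∀ (l : List (ℕ×ℕ)) (occ occ' : Finset ℕ),
    (∀ pr ∈ l, pr.2 = c ∧ 1 ≤ pr.1) →
    Finset.Ico a (a+c) ⊆ occ →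
    parkList m l occ = some occ' →
    l.length ≤ (Finset.Ico 1 a \ occ).card / c + (Finset.Ico (a+c) (m+1) \ occ).card / c := by
  intro l
  induction l with
  | nil => intro occ occ' _ _ _; simp
  | cons pr l ih =>
    intro occ occ' hl hsub hpark
    obtain ⟨hc2, hp1⟩ := hl pr List.mem_cons_self
    rw [parkList] at hpark
    obtain ⟨occ₁, hone, hrest⟩ := Option.bind_eq_some_iff.mp hpark
    rw [parkOne] at hone
    by_cases hP : ∃ j, pr.1 ≤ j ∧ j + pr.2 ≤ m + 1 ∧ ∀ s ∈ Finset.Ico j (j + pr.2), s ∉ occ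
    swap
    · rw [dif_neg hP] at hone; exact absurd hone (by simp)
    rw [dif_pos hP] at hone
    set j := Nat.find hP with hjdef
    obtain ⟨hpj, hjm, hdisj⟩ := Nat.find_spec hP
    rw [← hjdef] at hpj hjm hdisj
    rw [hc2] at hjm hdisj hone
    have hocc₁ : occ ∪ Finset.Ico j (j+c) = occ₁ := Option.some.inj hone
    rw [← hocc₁] at hrest
    have hj1 : 1 ≤ j := le_trans hp1 hpj
    have hl' : ∀ pr ∈ l, pr.2 = c ∧ 1 ≤ pr.1 :=
      fun pr h => hl pr (List.mem_cons_of_mem _ h)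
    have hdichot : j + c ≤ a ∨ a + c ≤ j := by
      by_contra h
      push_neg at h
      exact hdisj (max j a) (by rw [Finset.mem_Ico]; omega)
        (hsub (by rw [Finset.mem_Ico]; omega))
    have hsub' : Finset.Ico a (a+c) ⊆ occ ∪ Finset.Ico j (j+c) :=
      hsub.trans Finset.subset_union_left
    have hIH := ih _ _ hl' hsub' hrest
    rcases hdichot with hA | hB
    · have hblk : Finset.Ico j (j+c) ⊆ Finset.Ico 1 a \ occ := by
        intro s hs
        rw [Finset.mem_Ico] at hs
        rw [Finset.mem_sdiff, Finset.mem_Ico]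
        exact ⟨⟨by omega, by omega⟩, hdisj s (Finset.mem_Ico.mpr hs)⟩
      have hAcard : (Finset.Ico 1 a \ (occ ∪ Finset.Ico j (j+c))).card
          = (Finset.Ico 1 a \ occ).card - c := by
        have he : Finset.Ico 1 a \ (occ ∪ Finset.Ico j (j+c))
            = (Finset.Ico 1 a \ occ) \ Finset.Ico j (j+c) := by
          ext s
          simp only [Finset.mem_sdiff, Finset.mem_union, not_or]
          tauto
        rw [he, Finset.card_sdiff_of_subset hblk, Nat.card_Ico]
        congr 1
        omega
      have hBeq : Finset.Ico (a+c) (m+1) \ (occ ∪ Finset.Ico j (j+c))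
          = Finset.Ico (a+c) (m+1) \ occ := by
        ext s
        simp only [Finset.mem_sdiff, Finset.mem_union, Finset.mem_Ico, not_or]
        constructor
        · tauto
        · rintro ⟨h1, h2⟩; exact ⟨h1, h2, by omega⟩
      have hcle : c ≤ (Finset.Ico 1 a \ occ).card := by
        have h' := Finset.card_le_card hblk
        rwa [Nat.card_Ico, show j+c-j = c by omega] at h'
      rw [hAcard, hBeq] at hIH
      have hdiv : (Finset.Ico 1 a \ occ).card / c
          = ((Finset.Ico 1 a \ occ).card - c)/c + 1 := by
        rw [← Nat.add_div_right _ hc, Nat.sub_add_cancel hcle]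
      simp only [List.length_cons]
      omega
    · have hblk : Finset.Ico j (j+c) ⊆ Finset.Ico (a+c) (m+1) \ occ := by
        intro s hs
        rw [Finset.mem_Ico] at hs
        rw [Finset.mem_sdiff, Finset.mem_Ico]
        exact ⟨⟨by omega, by omega⟩, hdisj s (Finset.mem_Ico.mpr hs)⟩
      have hBcard : (Finset.Ico (a+c) (m+1) \ (occ ∪ Finset.Ico j (j+c))).card
          = (Finset.Ico (a+c) (m+1) \ occ).card - c := by
        have he : Finset.Ico (a+c) (m+1) \ (occ ∪ Finset.Ico j (j+c))
            = (Finset.Ico (a+c) (m+1) \ occ) \ Finset.Ico j (j+c) := by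
          ext s
          simp only [Finset.mem_sdiff, Finset.mem_union, not_or]
          tauto
        rw [he, Finset.card_sdiff_of_subset hblk, Nat.card_Ico]
        congr 1
        omega
      have hAeq : Finset.Ico 1 a \ (occ ∪ Finset.Ico j (j+c))
          = Finset.Ico 1 a \ occ := by
        ext s
        simp only [Finset.mem_sdiff, Finset.mem_union, Finset.mem_Ico, not_or]
        constructor
        · tauto
        · rintro ⟨h1, h2⟩; exact ⟨h1, h2, by omega⟩
      have hcle : c ≤ (Finset.Ico (a+c) (m+1) \ occ).card := by
        have h' := Finset.card_le_card hblk
        rwa [Nat.card_Ico, show j+c-j = c by omega] at h'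
      rw [hBcard, hAeq] at hIH
      have hdiv : (Finset.Ico (a+c) (m+1) \ occ).card / c
          = ((Finset.Ico (a+c) (m+1) \ occ).card - c)/c + 1 := by
        rw [← Nat.add_div_right _ hc, Nat.sub_add_cancel hcle]
      simp only [List.length_cons]
      omega

lemma zip_replicate'' {c : ℕ} : ∀ (x : List ℕ) (n : ℕ), x.length ≤ n →
    x.zip (List.replicate n c) = x.map (fun a => (a, c)) := by
  intro x
  induction x with
  | nil => intro n _; simp
  | cons a x ih =>
    intro n h
    cases n with
    | zero => simp at h
    | succ n =>
      rw [List.replicate_succ, List.zip_cons_cons, List.map_cons, ih n (by simpa using h)]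

lemma isSome_map_occ {f : Finset ℕ → Finset ℕ} {o : Option (Finset ℕ)} :
    (o.map f).isSome = o.isSome := by
  cases o <;> rfl

lemma decomp {c n : ℕ} (hc : 0 < c) {a : ℕ} (ha1 : 1 ≤ a) (han : a ≤ c*n)
    (hmod : a % c = 1 % c) : a = c * ((a-1)/c) + 1 ∧ (a-1)/c < n := by
  have hmod' : (1:ℕ) % c = a % c := hmod.symm
  have hdvd : c ∣ a - 1 := (Nat.modEq_iff_dvd' ha1).mp hmod'
  obtain ⟨k, hk⟩ := hdvd
  have hdiv : (a-1)/c = k := by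
    rw [hk, Nat.mul_div_cancel_left k hc]
  rw [hdiv]
  constructor
  · omega
  · have h' : c*k < c*n := by omega
    exact Nat.lt_of_mul_lt_mul_left h'

theorem stmt3 (c n : ℕ) (hc : 0 < c) (hn : 0 < n)
    (x : List ℕ) (hlen : x.length = n)
    (hx : ∀ a ∈ x, 1 ≤ a ∧ a ≤ c * n) :
    x ∈ PAinv (List.replicate n c) ↔
      (∀ a ∈ x, a % c = 1 % c) ∧
      (∀ j, 1 ≤ j → j ≤ n → j ≤ x.countP (fun a => decide (a ≤ c * j))) := by
  have hyl : (List.replicate n c).length = n := List.length_replicate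
  have hysum : (List.replicate n c).sum = c * n := by
    rw [List.sum_replicate, smul_eq_mul, mul_comm]
  have hocc0 : occSet c (∅ : Finset ℕ) = ∅ := by simp [occSet]
  constructor
  · intro hinv
    have h1 : ∀ a ∈ x, a % c = 1 % c := by
      intro a ha
      by_contra hmod
      have hcne : c ≠ 1 := by
        rintro rfl
        exact hmod (by omega)
      have hc2 : 2 ≤ c := by omega
      have ha1 := (hx a ha).1
      have han := (hx a ha).2
      have hperm : (a :: x.erase a).Perm x := (List.perm_cons_erase ha).symm
      obtain ⟨hlen', hbd', hpark⟩ := hinv _ hperm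
      rw [hysum] at hpark
      have hlx : (a :: x.erase a).length = n := by rw [hperm.length_eq, hlen]
      rw [zip_replicate'' _ n (le_of_eq hlx)] at hpark
      rw [List.map_cons, parkList] at hpark
      rw [Option.isSome_iff_exists] at hpark
      obtain ⟨occF, hoccF⟩ := hpark
      obtain ⟨occ₁, hone, hrest⟩ := Option.bind_eq_some_iff.mp hoccF
      by_cases hfit : a + c ≤ c*n + 1
      swap
      · rw [parkOne, dif_neg] at hone
        · exact absurd hone (by simp)
        · rintro ⟨j, hj1, hj2, -⟩; omega
      have hPa : a ≤ a ∧ a + c ≤ c*n+1 ∧ ∀ s ∈ Finset.Ico a (a+c), s ∉ (∅ : Finset ℕ) :=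
        ⟨le_rfl, hfit, by simp⟩
      have hPex : ∃ j, a ≤ j ∧ j + c ≤ c*n + 1 ∧
          ∀ s ∈ Finset.Ico j (j+c), s ∉ (∅ : Finset ℕ) := ⟨a, hPa⟩
      rw [parkOne, dif_pos hPex] at hone
      have hfind : Nat.find hPex = a := le_antisymm (Nat.find_le hPa) (Nat.find_spec hPex).1
      rw [hfind] at hone
      have hocc₁ : (∅ : Finset ℕ) ∪ Finset.Ico a (a+c) = occ₁ := Option.some.inj hone
      rw [Finset.empty_union] at hocc₁
      rw [← hocc₁] at hrest
      have hprops : ∀ pr ∈ (x.erase a).map (fun b => (b, c)), pr.2 = c ∧ 1 ≤ pr.1 := by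
        intro pr hpr
        rw [List.mem_map] at hpr
        obtain ⟨b, hb, rfl⟩ := hpr
        exact ⟨rfl, (hx b (List.mem_of_mem_erase hb)).1⟩
      have hmu := mu_bound hc _ _ _ hprops (Finset.Subset.refl _) hrest
      rw [List.length_map, List.length_erase_of_mem ha, hlen] at hmu
      have hA : Finset.Ico 1 a \ Finset.Ico a (a+c) = Finset.Ico 1 a := by
        ext s; simp only [Finset.mem_sdiff, Finset.mem_Ico]; omega
      have hB : Finset.Ico (a+c) (c*n+1) \ Finset.Ico a (a+c) = Finset.Ico (a+c) (c*n+1) := by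
        ext s; simp only [Finset.mem_sdiff, Finset.mem_Ico]; omega
      rw [hA, hB, Nat.card_Ico, Nat.card_Ico] at hmu
      set q := (a-1)/c with hq
      have hdm := Nat.div_add_mod (a-1) c
      rw [← hq] at hdm
      set r0 := (a-1) % c with hr0def
      have hr0c : r0 < c := Nat.mod_lt _ hc
      have hr0pos : 1 ≤ r0 := by
        by_contra h
        have ha' : a = 1 + c*q := by omega
        rw [ha', Nat.add_mul_mod_self_left] at hmod
        exact hmod rfl
      have hqn : q + 2 ≤ n := by
        have h' : c*(q+1) < c*n := by
          have e : c*(q+1) = c*q + c := by ring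
          omega
        have := Nat.lt_of_mul_lt_mul_left h'
        omega
      have he3 : c*(n-q-2) + c*(q+2) = c*n := by
        rw [← Nat.mul_add]
        congr 1
        omega
      have he4 : c*(q+2) = c*q + 2*c := by ring
      have hBval : c*n + 1 - (a+c) = c*(n-q-2) + (c - r0) := by omega
      have hBdiv : (c*n + 1 - (a+c)) / c = n - q - 2 := by
        rw [hBval, Nat.mul_add_div hc, Nat.div_eq_of_lt (by omega)]
        omega
      rw [hBdiv] at hmu
      omega
    refine ⟨h1, ?_⟩
    have hxa : ∀ a ∈ x, a = c * ((a-1)/c) + 1 ∧ (a-1)/c < n :=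
      fun a ha => decomp hc (hx a ha).1 (hx a ha).2 (h1 a ha)
    obtain ⟨-, -, hpark⟩ := hinv x (List.Perm.refl x)
    rw [hysum, zip_replicate'' _ n (le_of_eq hlen)] at hpark
    have hmap : x.map (fun a => (a, c))
        = (x.map (fun a => (a-1)/c)).map (fun k => (c*k+1, c)) := by
      rw [List.map_map]
      apply List.map_congr_left
      intro a ha
      have h' := (hxa a ha).1
      simp only [Function.comp_apply]
      rw [← h']
    rw [hmap, ← hocc0, parkList_occSet hc _ ∅ (by simp)] at hpark
    rw [isSome_map_occ] at hpark
    obtain ⟨S', hS'⟩ := Option.isSome_iff_exists.mp hpark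
    obtain ⟨-, hbound, hcnt⟩ := unec n _ ∅ S' hS'
    intro j hj1 hjn
    have hcj := hcnt j
    have hsubIco : (S' \ ∅).filter (fun t => j ≤ t) ⊆ Finset.Ico j n := by
      intro t ht
      simp only [Finset.mem_filter, Finset.mem_sdiff, Finset.notMem_empty,
        Finset.mem_Ico] at ht ⊢
      rcases hbound t ht.1.1 with h | h
      · exact absurd h (Finset.notMem_empty t)
      · exact ⟨ht.2, h⟩
    have hcard := le_trans hcj (Finset.card_le_card hsubIco)
    rw [Nat.card_Ico] at hcard
    set l := x.map (fun a => (a-1)/c) with hldef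
    have hlen_l : l.length = n := by rw [hldef, List.length_map, hlen]
    have hsplit := List.length_eq_countP_add_countP (fun k => decide (j ≤ k)) (l := l)
    have hnegc : l.countP (fun k => decide ¬(decide (j ≤ k)) = true)
        = l.countP (fun k => decide (k < j)) := by
      apply List.countP_congr
      intro k _
      simp only [decide_eq_true_eq]
      omega
    have hxl : x.countP (fun a => decide (a ≤ c*j)) = l.countP (fun k => decide (k < j)) := by
      rw [hldef, List.countP_map]
      apply List.countP_congr
      intro a ha
      simp only [Function.comp_apply, decide_eq_true_eq]
      obtain ⟨hae, hlt⟩ := hxa a ha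
      constructor
      · intro h'
        by_contra hges
        push_neg at hges
        have := Nat.mul_le_mul_left c hges
        omega
      · intro h'
        have h'' : (a-1)/c + 1 ≤ j := h'
        have := Nat.mul_le_mul_left c h''
        have e : c*((a-1)/c + 1) = c*((a-1)/c) + c := by ring
        omega
    rw [hxl]
    omega
  · rintro ⟨h1, h2⟩ x' hperm
    have hlx' : x'.length = n := by rw [hperm.length_eq, hlen]
    have hx' : ∀ a ∈ x', 1 ≤ a ∧ a ≤ c * n := fun a ha => hx a (hperm.subset ha)
    have h1' : ∀ a ∈ x', a % c = 1 % c := fun a ha => h1 a (hperm.subset ha)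
    have hxa' : ∀ a ∈ x', a = c * ((a-1)/c) + 1 ∧ (a-1)/c < n :=
      fun a ha => decomp hc (hx' a ha).1 (hx' a ha).2 (h1' a ha)
    refine ⟨by rw [hlx', hyl], ?_, ?_⟩
    · intro a ha
      rw [hysum]
      exact hx' a ha
    · rw [hysum, zip_replicate'' _ n (le_of_eq hlx')]
      have hmap' : x'.map (fun a => (a, c))
          = (x'.map (fun a => (a-1)/c)).map (fun k => (c*k+1, c)) := by
        rw [List.map_map]
        apply List.map_congr_left
        intro a ha
        have h' := (hxa' a ha).1
        simp only [Function.comp_apply]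
        rw [← h']
      rw [hmap', ← hocc0, parkList_occSet hc _ ∅ (by simp)]
      rw [isSome_map_occ]
      apply usuff
      intro j hj
      have hflt : (Finset.Ico j n).filter (fun t => t ∉ (∅:Finset ℕ)) = Finset.Ico j n := by
        simp
      rw [hflt, Nat.card_Ico]
      set l' := x'.map (fun a => (a-1)/c) with hl'def
      have hll : l'.length = n := by rw [hl'def, List.length_map, hlx']
      by_cases hj0 : j = 0
      · subst hj0
        have := List.countP_le_length (p := fun k => decide (0 ≤ k)) (l := l')
        omega
      · have hcount := h2 j (by omega) hj
        have hpc : x.countP (fun a => decide (a ≤ c*j)) = x'.countP (fun a => decide (a ≤ c*j)) :=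
          (hperm.countP_eq _).symm
        have hxl' : x'.countP (fun a => decide (a ≤ c*j))
            = l'.countP (fun k => decide (k < j)) := by
          rw [hl'def, List.countP_map]
          apply List.countP_congr
          intro a ha
          simp only [Function.comp_apply, decide_eq_true_eq]
          obtain ⟨hae, hlt⟩ := hxa' a ha
          constructor
          · intro h'
            by_contra hges
            push_neg at hges
            have := Nat.mul_le_mul_left c hges
            omega
          · intro h'
            have h'' : (a-1)/c + 1 ≤ j := h'
            have := Nat.mul_le_mul_left c h''
            have e : c*((a-1)/c + 1) = c*((a-1)/c) + c := by ring
            omega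
        have hsplit := List.length_eq_countP_add_countP (fun k => decide (j ≤ k)) (l := l')
        have hnegc : l'.countP (fun k => decide ¬(decide (j ≤ k)) = true)
            = l'.countP (fun k => decide (k < j)) := by
          apply List.countP_congr
          intro k _
          simp only [decide_eq_true_eq]
          omega
        omega
end
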